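/- Let sinc(x) = sin(πx)/(πx) for x ≠ 0 and sinc(0) = 1. Let P > 0, ν > 0 and θ > 0 be real numbers, set β = ⌊1/θ⌋ and α = 1/θ − β, and define g_ℓ = Pν·sinc(ℓ/θ) for ℓ ∈ ℤ. Then the interference power I = (1/(Pν)) · Σ_{ℓ∈ℤ, ℓ≠0} g_ℓ² equals Pν·( θ²·(β² + 2αβ + α) − 1 ). In particular, if 1/θ is a positive integer, then I = 0. -/

import Mathlib

open Real

/-- `sinc x = sin(πx)/(πx)` for `x ≠ 0`, and `sinc 0 = 1`. -/
noncomputable def sinc (x : ℝ) : ℝ := if x = 0 then 1 else Real.sin (π * x) / (π * x)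

lemma sinc_neg (x : ℝ) : _root_.sinc (-x) = _root_.sinc x := by
  unfold _root_.sinc
  rcases eq_or_ne x 0 with h | h
  · simp [h]
  · rw [if_neg (neg_ne_zero.mpr h), if_neg h]
    rw [mul_neg, Real.sin_neg, neg_div_neg_eq]

lemma bernoulli_two_eval (x : ℝ) :
    (Polynomial.map (algebraMap ℚ ℝ) (Polynomial.bernoulli 2)).eval x = x ^ 2 - x + 1 / 6 := by
  have h2 : _root_.bernoulli 2 = 1 / 6 := by
    rw [bernoulli_eq_bernoulli'_of_ne_one (by norm_num), bernoulli'_two]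
  simp [Polynomial.bernoulli, Finset.sum_range_succ, bernoulli_zero, bernoulli_one, h2]
  ring

lemma hasSum_sin_sq_div_sq {x : ℝ} (hx : x ∈ Set.Icc (0 : ℝ) 1) :
    HasSum (fun n : ℕ => Real.sin (π * n * x) ^ 2 / (n : ℝ) ^ 2) (π ^ 2 * (x - x ^ 2) / 2) := by
  have h1 := hasSum_zeta_two
  have h2 := hasSum_one_div_nat_pow_mul_cos (k := 1) one_ne_zero hx
  have h3 := (h1.sub h2).div_const 2
  convert h3 using 2 with n
  · rfl
  · rcases eq_or_ne (n : ℝ) 0 with h | h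
    · simp [h]
    · rw [Real.sin_sq_eq_half_sub]
      have : 2 * (π * n * x) = 2 * π * n * x := by ring
      rw [this]
      field_simp
      ring_nf
  · rw [show 2 * 1 = 2 from rfl, bernoulli_two_eval]
    norm_num [Nat.factorial]
    ring

lemma sin_sq_shift (x : ℝ) (l : ℤ) :
    Real.sin (π * l * x) ^ 2 = Real.sin (π * l * (x - ⌊x⌋)) ^ 2 := by
  rw [Real.sin_sq_eq_half_sub, Real.sin_sq_eq_half_sub]
  have h : 2 * (π * l * x) = 2 * (π * l * (x - ⌊x⌋)) + (↑(l * ⌊x⌋) : ℝ) * (2 * π) := by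
    push_cast; ring
  rw [h, Real.cos_add_int_mul_two_pi]

lemma alg_step (Q θ x a b : ℝ) (h1 : θ * x = 1) (h2 : x = b + a) (hQ : Q ≠ 0) (hx : x ≠ 0) :
    (1 / Q) * (Q ^ 2 * (a - a ^ 2) / x ^ 2) = Q * (θ ^ 2 * (b ^ 2 + 2 * a * b + a) - 1) := by
  subst h2
  have hθx : θ = 1 / (b + a) := by rw [eq_div_iff hx]; exact h1
  rw [hθx]
  field_simp
  ring

set_option maxHeartbeats 2000000 in
/-- Eq. (20) of the paper: the matched-filter interference power
`I = (1/(Pν))·Σ_{ℓ≠0} g_ℓ²`, with taps `g_ℓ = Pν·sinc(ℓ/θ)`, equals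
`Pν·(θ²(β² + 2αβ + α) - 1)` where `β = ⌊1/θ⌋` and `α = 1/θ - β`.
In particular, if `1/θ` is a positive integer then `I = 0`. -/
theorem matched_filter_interference_power (P ν θ : ℝ)
    (hP : 0 < P) (hν : 0 < ν) (hθ : 0 < θ) :
    (1 / (P * ν)) * (∑' ℓ : {l : ℤ // l ≠ 0}, (P * ν * _root_.sinc (((ℓ : ℤ) : ℝ) / θ)) ^ 2)
        = P * ν * (θ ^ 2 * ((⌊1 / θ⌋ : ℝ) ^ 2 + 2 * (1 / θ - (⌊1 / θ⌋ : ℝ)) * (⌊1 / θ⌋ : ℝ)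
            + (1 / θ - (⌊1 / θ⌋ : ℝ))) - 1) ∧
      ((∃ n : ℕ, 0 < n ∧ 1 / θ = (n : ℝ)) →
        (1 / (P * ν)) * (∑' ℓ : {l : ℤ // l ≠ 0}, (P * ν * _root_.sinc (((ℓ : ℤ) : ℝ) / θ)) ^ 2) = 0) := by
  have hθ0 : θ ≠ 0 := ne_of_gt hθ
  have hPν : (0 : ℝ) < P * ν := mul_pos hP hν
  have hPν0 : P * ν ≠ 0 := ne_of_gt hPν
  have hπ : (0 : ℝ) < π := Real.pi_pos
  set x : ℝ := 1 / θ with hxdef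
  have hx0 : (0 : ℝ) < x := by positivity
  have hxne : x ≠ 0 := ne_of_gt hx0
  set β : ℤ := ⌊x⌋ with hβ
  set α : ℝ := x - β with hα
  have hαf : α = Int.fract x := by rw [hα, Int.fract]
  have hα0 : 0 ≤ α := by rw [hαf]; exact Int.fract_nonneg x
  have hα1 : α < 1 := by rw [hαf]; exact Int.fract_lt_one x
  set c : ℝ := (P * ν) ^ 2 / (π ^ 2 * x ^ 2) with hc
  set S : ℝ := c * (π ^ 2 * (α - α ^ 2) / 2) with hS
  set f : ℤ → ℝ := fun l => (P * ν * _root_.sinc ((l : ℝ) / θ)) ^ 2 with hf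
  have hg : HasSum (fun n : ℕ => c * (Real.sin (π * n * α) ^ 2 / (n : ℝ) ^ 2)) S :=
    (hasSum_sin_sq_div_sq ⟨hα0, hα1.le⟩).mul_left c
  have hfg : ∀ l : ℤ, l ≠ 0 →
      f l = c * (Real.sin (π * l * α) ^ 2 / (l : ℝ) ^ 2) := by
    intro l hl
    have hlr : (l : ℝ) ≠ 0 := Int.cast_ne_zero.mpr hl
    have hlx : (l : ℝ) / θ = l * x := by rw [hxdef]; ring
    have hne : (l : ℝ) * x ≠ 0 := mul_ne_zero hlr hxne
    have hsq : Real.sin (π * l * x) ^ 2 = Real.sin (π * l * α) ^ 2 := by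
      rw [hα, hβ]; exact sin_sq_shift x l
    simp only [hf, _root_.sinc, hlx, if_neg hne]
    rw [mul_pow, div_pow, show π * ((l : ℝ) * x) = π * l * x by ring, hsq, hc]
    field_simp
  have hf0 : f 0 = (P * ν) ^ 2 := by
    simp [hf, _root_.sinc]
  have hfneg : ∀ l : ℤ, f (-l) = f l := by
    intro l
    simp only [hf, Int.cast_neg, neg_div, _root_.sinc_neg]
  -- sum over n ≥ 1
  have hfun : (fun n : ℕ => f ((n : ℤ) + 1))
      = fun n : ℕ => c * (Real.sin (π * ((n : ℝ) + 1) * α) ^ 2 / ((n : ℝ) + 1) ^ 2) := by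
    funext n
    rw [hfg ((n : ℤ) + 1) (by omega)]
    push_cast
    ring_nf
  have hshift : HasSum (fun n : ℕ => c * (Real.sin (π * ((n : ℝ) + 1) * α) ^ 2
      / ((n : ℝ) + 1) ^ 2)) S := by
    have h := (hasSum_nat_add_iff'
      (f := fun n : ℕ => c * (Real.sin (π * n * α) ^ 2 / (n : ℝ) ^ 2)) 1).mpr hg
    simp only [Finset.range_one, Finset.sum_singleton, Nat.cast_zero, Nat.cast_add,
      Nat.cast_one] at h
    simpa using h
  have hpos : HasSum (fun n : ℕ => f ((n : ℤ) + 1)) S := by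
    rw [hfun]; exact hshift
  have hnat : HasSum (fun n : ℕ => f n) (S + f 0) := by
    have h := (hasSum_nat_add_iff (f := fun n : ℕ => f n) 1).mp
      (by
        have : (fun n : ℕ => f ((n : ℤ) + 1)) = fun n : ℕ => f ((n + 1 : ℕ) : ℤ) := by
          funext n; push_cast; ring_nf
        rw [← this]; exact hpos)
    simpa using h
  have hneg : HasSum (fun n : ℕ => f (-((n : ℤ) + 1))) S := by
    have : (fun n : ℕ => f (-((n : ℤ) + 1))) = fun n : ℕ => f ((n : ℤ) + 1) := by
      funext n; rw [hfneg]
    rw [this]; exact hpos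
  have htot : HasSum f ((S + f 0) + S) := hnat.of_nat_of_neg_add_one hneg
  have hsub : HasSum (fun y : { y : ℤ // y ∉ ({0} : Finset ℤ) } => f y)
      (((S + f 0) + S) - ∑ i ∈ ({0} : Finset ℤ), f i) :=
    (Finset.hasSum_iff_compl ({0} : Finset ℤ)).mp htot
  have hsub2 : HasSum (fun l : {l : ℤ // l ≠ 0} => f l) (2 * S) := by
    have h2 : (S + f 0 + S) - ∑ i ∈ ({0} : Finset ℤ), f i = 2 * S := by
      simp only [Finset.sum_singleton]; ring
    rw [← h2]
    exact ((Equiv.subtypeEquivRight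
      (fun l : ℤ => (by simp : l ≠ 0 ↔ l ∉ ({0} : Finset ℤ)))).hasSum_iff).mpr hsub
  have htsum : (∑' ℓ : {l : ℤ // l ≠ 0}, (P * ν * _root_.sinc (((ℓ : ℤ) : ℝ) / θ)) ^ 2) = 2 * S :=
    hsub2.tsum_eq
  have hθx : θ * x = 1 := by rw [hxdef]; field_simp
  have hmain : (1 / (P * ν)) * (∑' ℓ : {l : ℤ // l ≠ 0}, (P * ν * _root_.sinc (((ℓ : ℤ) : ℝ) / θ)) ^ 2)
      = P * ν * (θ ^ 2 * ((β : ℝ) ^ 2 + 2 * α * (β : ℝ) + α) - 1) := by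
    rw [htsum]
    have h2S : 2 * S = (P * ν) ^ 2 * (α - α ^ 2) / x ^ 2 := by
      rw [hS, hc]; field_simp
    rw [h2S]
    exact alg_step (P * ν) θ x α (β : ℝ) hθx (by rw [hα]; ring) hPν0 hxne
  constructor
  · exact hmain
  · rintro ⟨n, hn, hne⟩
    rw [hmain]
    have hβn : (β : ℝ) = (n : ℝ) := by
      rw [hβ, hne, Int.floor_natCast]
      push_cast
      ring
    have hαn : α = 0 := by
      rw [hα, hβn, hne]; ring
    have hθn : θ * (n : ℝ) = 1 := by
      rw [← hne]; exact hθx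
    rw [hαn, hβn]
    linear_combination (P * ν) * (θ * (n : ℝ) + 1) * hθn
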